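/- Let G be a group, H a subgroup, and k a natural number. The group of G-equivariant bijections of Fin k × (G ⧸ H), where G acts trivially on Fin k and by left translation on G ⧸ H, is isomorphic to the wreath product Σ_k ∫ WH, i.e. the semidirect product (Fin k → WH) ⋊ Perm(Fin k), where WH = N_G(H) ⧸ H and Perm(Fin k) acts on the group of functions Fin k → WH by permuting coordinates. -/

import Mathlib

/-- The group of `G`-equivariant bijections of `Fin k × (G ⧸ H)`, where `G` acts
trivially on `Fin k` and by left translation on `G ⧸ H`, as a subgroup of the
permutation group. -/
def equivariantPermsProd (G : Type*) [Group G] (H : Subgroup G) (k : ℕ) :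
    Subgroup (Equiv.Perm (Fin k × (G ⧸ H))) where
  carrier := {f | ∀ (g : G) (i : Fin k) (x : G ⧸ H),
    f (i, g • x) = ((f (i, x)).1, g • (f (i, x)).2)}
  one_mem' := fun _ _ _ => rfl
  mul_mem' := by
    intro f f' hf hf' g i x
    simp only [Equiv.Perm.mul_apply]
    rw [hf' g i x]
    exact hf g (f' (i, x)).1 (f' (i, x)).2
  inv_mem' := by
    intro f hf g i x
    apply f.injective
    rw [← Equiv.Perm.mul_apply, mul_inv_cancel, Equiv.Perm.one_apply, hf g (f⁻¹ (i, x)).1 (f⁻¹ (i, x)).2]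
    rw [← Equiv.Perm.mul_apply, mul_inv_cancel, Equiv.Perm.one_apply]

/-- The homomorphism `Perm (Fin k) →* MulAut (Fin k → W)` permuting the coordinates:
`(σ • f) i = f (σ⁻¹ i)`. -/
def permuteCoords (W : Type*) [Group W] (k : ℕ) :
    Equiv.Perm (Fin k) →* MulAut (Fin k → W) where
  toFun σ := MulEquiv.arrowCongr σ (MulEquiv.refl W)
  map_one' := rfl
  map_mul' := fun σ τ => rfl


section Aux

variable {G : Type*} [Group G] (H : Subgroup G)

/-- Right translation by inverse of a normalizer element, as a permutation of G ⧸ H. -/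
def rmulPerm (n : (Subgroup.normalizer (H : Set G))) : Equiv.Perm (G ⧸ H) where
  toFun := Quotient.map' (· * (n : G)⁻¹) (by
    intro a b hab
    rw [QuotientGroup.leftRel_apply] at *
    simpa [mul_assoc] using (n.2 _).mp hab)
  invFun := Quotient.map' (· * (n : G)) (by
    intro a b hab
    rw [QuotientGroup.leftRel_apply] at *
    have h2 : (n:G) * ((n:G)⁻¹ * (a⁻¹ * b) * (n:G)) * (n:G)⁻¹ ∈ H := by
      simpa [mul_assoc] using hab
    simpa [mul_assoc] using (n.2 _).mpr h2)
  left_inv := fun x => Quotient.inductionOn' x (fun g => by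
    simp [Quotient.map'_mk'', mul_assoc])
  right_inv := fun x => Quotient.inductionOn' x (fun g => by
    simp [Quotient.map'_mk'', mul_assoc])

theorem rmulPerm_mk (n : (Subgroup.normalizer (H : Set G))) (g : G) :
    rmulPerm H n (QuotientGroup.mk g) = QuotientGroup.mk (g * (n:G)⁻¹) := rfl

/-- Right translation as a hom from the normalizer. -/
def rho0 : (Subgroup.normalizer (H : Set G)) →* Equiv.Perm (G ⧸ H) where
  toFun := rmulPerm H
  map_one' := by
    ext x
    refine Quotient.inductionOn' x (fun g => ?_)
    simp [rmulPerm_mk]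
  map_mul' n m := by
    ext x
    refine Quotient.inductionOn' x (fun g => ?_)
    show rmulPerm H (n * m) (Quotient.mk'' g) = rmulPerm H n (rmulPerm H m (Quotient.mk'' g))
    show QuotientGroup.mk _ = _
    simp [rmulPerm_mk, mul_assoc]

/-- The Weyl-group action by right translations. -/
def rho : ((Subgroup.normalizer (H : Set G)) ⧸ H.subgroupOf (Subgroup.normalizer (H : Set G))) →* Equiv.Perm (G ⧸ H) :=
  QuotientGroup.lift _ (rho0 H) (by
    intro n hn
    ext x
    refine Quotient.inductionOn' x (fun g => ?_)
    show rmulPerm H n _ = _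
    rw [rmulPerm_mk]
    refine (QuotientGroup.eq).mpr ?_
    simpa using H.inv_mem hn)

theorem rho_mk (n : (Subgroup.normalizer (H : Set G))) (g : G) :
    rho H (QuotientGroup.mk n) (QuotientGroup.mk g) = QuotientGroup.mk (g * (n:G)⁻¹) := rfl

theorem rho_equivariant (w : (Subgroup.normalizer (H : Set G)) ⧸ H.subgroupOf (Subgroup.normalizer (H : Set G))) (g : G) (x : G ⧸ H) :
    rho H w (g • x) = g • rho H w x := by
  refine QuotientGroup.induction_on w (fun n => ?_)
  refine Quotient.inductionOn' x (fun a => ?_)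
  show (rho H ↑n) (g • (QuotientGroup.mk a)) = g • (rho H ↑n) (QuotientGroup.mk a)
  rw [MulAction.Quotient.smul_mk, rho_mk, rho_mk, MulAction.Quotient.smul_mk, smul_eq_mul,
    smul_eq_mul, mul_assoc]

theorem rho_injective : Function.Injective (rho H) := by
  refine (injective_iff_map_eq_one _).mpr (fun w => ?_)
  refine QuotientGroup.induction_on w (fun n => fun h => ?_)
  have : rho H (QuotientGroup.mk n) (QuotientGroup.mk (1:G)) = QuotientGroup.mk (1:G) := by
    rw [h]; rfl
  rw [rho_mk, one_mul] at this
  have hn : (n:G) ∈ H := by simpa using (QuotientGroup.eq).mp this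
  exact (QuotientGroup.eq_one_iff _).mpr hn

theorem conj_mem_of_equivariant (e : Equiv.Perm (G ⧸ H))
    (he : ∀ (g : G) (x : G ⧸ H), e (g • x) = g • e x) (a : G)
    (ha : e (QuotientGroup.mk 1) = QuotientGroup.mk a) :
    ∀ h ∈ H, a⁻¹ * h * a ∈ H := by
  intro h hh
  have h1 : e (QuotientGroup.mk (h⁻¹ : G)) = QuotientGroup.mk (h⁻¹ * a) := by
    have : (QuotientGroup.mk (h⁻¹ : G) : G ⧸ H) = h⁻¹ • QuotientGroup.mk (1:G) := by
      rw [MulAction.Quotient.smul_mk, smul_eq_mul, mul_one]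
    rw [this, he, ha, MulAction.Quotient.smul_mk, smul_eq_mul]
  have h2 : (QuotientGroup.mk (h⁻¹ : G) : G ⧸ H) = QuotientGroup.mk (1:G) := by
    refine (QuotientGroup.eq).mpr ?_
    simpa using hh
  rw [h2, ha] at h1
  have := (QuotientGroup.eq).mp h1.symm
  simpa [mul_assoc] using this

theorem symm_equivariant (e : Equiv.Perm (G ⧸ H))
    (he : ∀ (g : G) (x : G ⧸ H), e (g • x) = g • e x) :
    ∀ (g : G) (x : G ⧸ H), e.symm (g • x) = g • e.symm x := by
  intro g x
  apply e.injective
  rw [Equiv.apply_symm_apply, he, Equiv.apply_symm_apply]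

theorem equivariant_eq_rho (e : Equiv.Perm (G ⧸ H))
    (he : ∀ (g : G) (x : G ⧸ H), e (g • x) = g • e x) :
    ∃ w, rho H w = e := by
  obtain ⟨a, ha⟩ : ∃ a : G, e (QuotientGroup.mk 1) = QuotientGroup.mk a :=
    Quotient.inductionOn' (e (QuotientGroup.mk 1)) (fun a => ⟨a, rfl⟩)
  obtain ⟨b, hb⟩ : ∃ b : G, e.symm (QuotientGroup.mk 1) = QuotientGroup.mk b :=
    Quotient.inductionOn' (e.symm (QuotientGroup.mk 1)) (fun b => ⟨b, rfl⟩)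
  have dir1 := conj_mem_of_equivariant H e he a ha
  have dir1' := conj_mem_of_equivariant H e.symm (symm_equivariant H e he) b hb
  -- b * a ∈ H
  have hba : b * a ∈ H := by
    have h1 : e (QuotientGroup.mk b) = QuotientGroup.mk (b * a) := by
      have : (QuotientGroup.mk (b : G) : G ⧸ H) = b • QuotientGroup.mk (1:G) := by
        rw [MulAction.Quotient.smul_mk, smul_eq_mul, mul_one]
      rw [this, he, ha, MulAction.Quotient.smul_mk, smul_eq_mul]
    rw [← hb, Equiv.apply_symm_apply] at h1
    simpa using (QuotientGroup.eq).mp h1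
  have dir2 : ∀ h ∈ H, a * h * a⁻¹ ∈ H := by
    intro h hh
    have hmem : b * a * h * (b * a)⁻¹ ∈ H := H.mul_mem (H.mul_mem hba hh) (H.inv_mem hba)
    have := dir1' _ hmem
    have heq : b⁻¹ * (b * a * h * (b * a)⁻¹) * b = a * h * a⁻¹ * 1 := by group
    rw [heq, mul_one] at this
    exact this
  have hanorm : a ∈ (Subgroup.normalizer (H : Set G)) := by
    intro h
    constructor
    · exact fun hh => dir2 h hh
    · intro hh
      have := dir1 _ hh
      have heq : a⁻¹ * (a * h * a⁻¹) * a = h := by group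
      rwa [heq] at this
  have hainv : a⁻¹ ∈ (Subgroup.normalizer (H : Set G)) := (Subgroup.normalizer (H : Set G)).inv_mem hanorm
  refine ⟨QuotientGroup.mk ⟨a⁻¹, hainv⟩, ?_⟩
  ext x
  refine Quotient.inductionOn' x (fun g => ?_)
  show rho H _ (QuotientGroup.mk g) = e (QuotientGroup.mk g)
  rw [rho_mk]
  have : (QuotientGroup.mk (g : G) : G ⧸ H) = g • QuotientGroup.mk (1:G) := by
    rw [MulAction.Quotient.smul_mk, smul_eq_mul, mul_one]
  rw [this, he, ha, MulAction.Quotient.smul_mk, smul_eq_mul]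
  norm_num

section Prod
variable (k : ℕ)

local notation "W" => (Subgroup.normalizer (H : Set G)) ⧸ H.subgroupOf (Subgroup.normalizer (H : Set G))

/-- Fiberwise right translations. -/
def fOne : (Fin k → W) →* Equiv.Perm (Fin k × (G ⧸ H)) where
  toFun w := Equiv.prodCongrRight (fun i => rho H (w i))
  map_one' := by
    ext ⟨i, x⟩ : 1
    simp [Equiv.prodCongrRight]
  map_mul' w w' := by
    ext ⟨i, x⟩ : 1
    simp [Equiv.prodCongrRight]

/-- Permuting the copies. -/
def fTwo : Equiv.Perm (Fin k) →* Equiv.Perm (Fin k × (G ⧸ H)) where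
  toFun σ := Equiv.prodCongr σ (Equiv.refl _)
  map_one' := by ext ⟨i, x⟩ : 1 <;> simp
  map_mul' σ τ := by ext ⟨i, x⟩ : 1 <;> simp

theorem hcomp : ∀ σ : Equiv.Perm (Fin k),
    (fOne H k).comp ((permuteCoords W k) σ).toMonoidHom =
      (MulAut.conj (fTwo H k σ)).toMonoidHom.comp (fOne H k) := by
  intro σ
  ext w : 1
  refine Equiv.ext ?_
  rintro ⟨i, x⟩
  show (Equiv.prodCongrRight fun j => rho H (w (σ.symm j))) (i, x) =
    (fTwo H k σ * fOne H k w * (fTwo H k σ)⁻¹) (i, x)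
  simp [Equiv.prodCongrRight, fOne, fTwo, Equiv.Perm.inv_def]

/-- The map from the wreath product to permutations. -/
def Phi : SemidirectProduct (Fin k → W) (Equiv.Perm (Fin k)) (permuteCoords W k) →*
    Equiv.Perm (Fin k × (G ⧸ H)) :=
  SemidirectProduct.lift (fOne H k) (fTwo H k) (hcomp H k)

theorem Phi_apply (w : Fin k → W) (σ : Equiv.Perm (Fin k)) (i : Fin k) (x : G ⧸ H) :
    Phi H k ⟨w, σ⟩ (i, x) = (σ i, rho H (w (σ i)) x) := rfl

theorem Phi_mem (p : SemidirectProduct (Fin k → W) (Equiv.Perm (Fin k)) (permuteCoords W k)) :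
    Phi H k p ∈ equivariantPermsProd G H k := by
  obtain ⟨w, σ⟩ := p
  intro g i x
  rw [Phi_apply, Phi_apply, rho_equivariant]

end Prod

end Aux

/-- The group of `G`-equivariant bijections of `Fin k × (G ⧸ H)` is isomorphic to the
wreath product `Σ_k ∫ WH`, the semidirect product `(Fin k → WH) ⋊ Perm (Fin k)` with
`Perm (Fin k)` permuting the coordinates, where `WH = N_G(H) ⧸ H` is the Weyl group. -/
theorem equivariant_perms_copies_iso_wreath (G : Type*) [Group G] (H : Subgroup G)
    (k : ℕ) :
    Nonempty (equivariantPermsProd G H k ≃*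
      SemidirectProduct (Fin k → ((Subgroup.normalizer (H : Set G)) ⧸ H.subgroupOf (Subgroup.normalizer (H : Set G))))
        (Equiv.Perm (Fin k))
        (permuteCoords ((Subgroup.normalizer (H : Set G)) ⧸ H.subgroupOf (Subgroup.normalizer (H : Set G))) k)) := by
  classical
  set Φ' := (Phi H k).codRestrict (equivariantPermsProd G H k) (Phi_mem H k) with hΦ'
  have hinj : Function.Injective Φ' := by
    refine (injective_iff_map_eq_one _).mpr ?_
    rintro ⟨w, σ⟩ h
    have h' : Phi H k ⟨w, σ⟩ = 1 := congrArg Subtype.val h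
    have hσ : σ = 1 := by
      refine Equiv.ext fun i => ?_
      have h2 := congrArg (fun e : Equiv.Perm (Fin k × (G ⧸ H)) =>
        (e (i, (QuotientGroup.mk 1 : G ⧸ H))).1) h'
      simp only [Phi_apply] at h2
      exact h2
    subst hσ
    have hw : w = 1 := by
      funext i
      show w i = 1
      refine rho_injective H ?_
      rw [map_one]
      refine Equiv.ext fun x => ?_
      have h2 := congrArg (fun e : Equiv.Perm (Fin k × (G ⧸ H)) => (e (i, x)).2) h'
      simp only [Phi_apply] at h2
      exact h2
    subst hw
    rfl
  have hsurj : Function.Surjective Φ' := by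
    rintro ⟨f, hf⟩
    have hfst : ∀ (i : Fin k) (x : G ⧸ H),
        (f (i, x)).1 = (f (i, (QuotientGroup.mk 1 : G ⧸ H))).1 := by
      intro i x
      refine Quotient.inductionOn' x (fun a => ?_)
      have hx : (Quotient.mk'' a : G ⧸ H) = a • QuotientGroup.mk (1 : G) := by
        show (QuotientGroup.mk a : G ⧸ H) = _
        rw [MulAction.Quotient.smul_mk, smul_eq_mul, mul_one]
      rw [hx, hf a i (QuotientGroup.mk 1)]
    have hσinj : Function.Injective
        (fun i : Fin k => (f (i, (QuotientGroup.mk 1 : G ⧸ H))).1) := by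
      intro i j hij
      have hij' : (f (i, (QuotientGroup.mk 1 : G ⧸ H))).1
          = (f (j, (QuotientGroup.mk 1 : G ⧸ H))).1 := hij
      obtain ⟨a, ha⟩ : ∃ a : G, (f (i, QuotientGroup.mk 1)).2 = QuotientGroup.mk a :=
        Quotient.inductionOn' (f (i, QuotientGroup.mk 1)).2 (fun a => ⟨a, rfl⟩)
      obtain ⟨b, hb⟩ : ∃ b : G, (f (j, QuotientGroup.mk 1)).2 = QuotientGroup.mk b :=
        Quotient.inductionOn' (f (j, QuotientGroup.mk 1)).2 (fun b => ⟨b, rfl⟩)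
      have key : f (i, (b * a⁻¹) • QuotientGroup.mk 1) = f (j, QuotientGroup.mk 1) := by
        rw [hf (b * a⁻¹) i (QuotientGroup.mk 1)]
        refine Prod.ext hij' ?_
        rw [ha, hb, MulAction.Quotient.smul_mk, smul_eq_mul]
        congr 1
        group
      exact (Prod.ext_iff.mp (f.injective key)).1
    let σ : Equiv.Perm (Fin k) :=
      Equiv.ofBijective _ (Finite.injective_iff_bijective.mp hσinj)
    have hσapp : ∀ i, σ i = (f (i, (QuotientGroup.mk 1 : G ⧸ H))).1 := fun _ => rfl
    have minj : ∀ i : Fin k, Function.Injective (fun x : G ⧸ H => (f (i, x)).2) := by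
      intro i x y hxy
      have hxy' : (f (i, x)).2 = (f (i, y)).2 := hxy
      have : f (i, x) = f (i, y) := Prod.ext ((hfst i x).trans (hfst i y).symm) hxy'
      exact (Prod.ext_iff.mp (f.injective this)).2
    have msurj : ∀ i : Fin k, Function.Surjective (fun x : G ⧸ H => (f (i, x)).2) := by
      intro i y
      obtain ⟨⟨p1, p2⟩, hp⟩ :
          ∃ p, f p = ((f (i, (QuotientGroup.mk 1 : G ⧸ H))).1, y) :=
        ⟨f.symm _, f.apply_symm_apply _⟩
      have h1 : (f (p1, (QuotientGroup.mk 1 : G ⧸ H))).1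
          = (f (i, (QuotientGroup.mk 1 : G ⧸ H))).1 :=
        (hfst p1 p2).symm.trans (Prod.ext_iff.mp hp).1
      have h2 : p1 = i := hσinj h1
      refine ⟨p2, ?_⟩
      show (f (i, p2)).2 = y
      rw [← h2]
      exact (Prod.ext_iff.mp hp).2
    let e : Fin k → Equiv.Perm (G ⧸ H) := fun i =>
      Equiv.ofBijective _ ⟨minj i, msurj i⟩
    have heapp : ∀ i x, e i x = (f (i, x)).2 := fun _ _ => rfl
    have heequiv : ∀ (i : Fin k) (g : G) (x : G ⧸ H), e i (g • x) = g • e i x := by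
      intro i g x
      rw [heapp, heapp, hf g i x]
    choose w0 hw0 using fun i => equivariant_eq_rho H (e i) (heequiv i)
    refine ⟨⟨fun j => w0 (σ.symm j), σ⟩, ?_⟩
    refine Subtype.ext ?_
    show Phi H k ⟨fun j => w0 (σ.symm j), σ⟩ = f
    refine Equiv.ext ?_
    rintro ⟨i, x⟩
    rw [Phi_apply]
    show (σ i, rho H (w0 (σ.symm (σ i))) x) = f (i, x)
    rw [Equiv.symm_apply_apply, hw0 i, heapp, hσapp]
    exact Prod.ext (hfst i x).symm rfl
  exact ⟨(MulEquiv.ofBijective Φ' ⟨hinj, hsurj⟩).symm⟩
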